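/- Let Z be a finite-dimensional D-invariant subspace of formal power series with D-invariant least space Z↓, and let T: C[[t]] → Z be the projector adjoint to the inclusion Z↓ ↪ C[τ] with respect to the sesquilinear pairings. Then T restricted to Z is the identity (T is a retraction) and the kernel of T equals the annihilator (Z↓)^⊥. -/

import Mathlib

noncomputable def degF {n : ℕ} (ν : Fin n →₀ ℕ) : ℕ := ν.sum fun _ k => k

noncomputable def pairS {n : ℕ} (p : MvPolynomial (Fin n) ℂ) (f : MvPowerSeries (Fin n) ℂ) : ℂ :=
  ∑ ν ∈ p.support,
    ((∏ i, Nat.factorial (ν i) : ℕ) : ℂ) * MvPolynomial.coeff ν p *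
      (starRingEnd ℂ) (MvPowerSeries.coeff ν f)

noncomputable def leastPartD {n : ℕ} (f : MvPowerSeries (Fin n) ℂ) (d : ℕ) :
    MvPolynomial (Fin n) ℂ :=
  ∑ ν ∈ (Finset.Iic ((Finsupp.equivFunOnFinite.symm fun _ => d) : Fin n →₀ ℕ)).filter
      (fun ν => degF ν = d),
    MvPolynomial.monomial ν (MvPowerSeries.coeff ν f)

noncomputable def ordPS {n : ℕ} (f : MvPowerSeries (Fin n) ℂ) : ℕ :=
  sInf {d | ∃ ν, degF ν = d ∧ MvPowerSeries.coeff ν f ≠ 0}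

noncomputable def leastPart {n : ℕ} (f : MvPowerSeries (Fin n) ℂ) : MvPolynomial (Fin n) ℂ :=
  leastPartD f (ordPS f)

noncomputable def leastSpace {n : ℕ} (Z : Submodule ℂ (MvPowerSeries (Fin n) ℂ)) :
    Submodule ℂ (MvPolynomial (Fin n) ℂ) :=
  Submodule.span ℂ (leastPart '' (Z : Set (MvPowerSeries (Fin n) ℂ)))

def DInvP {n : ℕ} (W : Submodule ℂ (MvPolynomial (Fin n) ℂ)) : Prop :=
  ∀ p ∈ W, ∀ i, MvPolynomial.pderiv i p ∈ W

noncomputable def pderivPS {n : ℕ} (i : Fin n) (f : MvPowerSeries (Fin n) ℂ) :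
    MvPowerSeries (Fin n) ℂ :=
  fun ν => ((ν i + 1 : ℕ) : ℂ) * MvPowerSeries.coeff (ν + Finsupp.single i 1) f

lemma pairS_zero {n : ℕ} (p : MvPolynomial (Fin n) ℂ) : pairS p 0 = 0 := by
  simp [pairS]

lemma pairS_sub {n : ℕ} (p : MvPolynomial (Fin n) ℂ) (f g : MvPowerSeries (Fin n) ℂ) :
    pairS p (f - g) = pairS p f - pairS p g := by
  simp [pairS, map_sub, mul_sub, Finset.sum_sub_distrib]

lemma apply_le_degF {n : ℕ} (ν : Fin n →₀ ℕ) (i : Fin n) : ν i ≤ degF ν := by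
  rcases eq_or_ne (ν i) 0 with h | h
  · simp [h]
  · exact Finset.single_le_sum (fun _ _ => Nat.zero_le _) (Finsupp.mem_support_iff.2 h)

lemma coeff_leastPart {n : ℕ} (f : MvPowerSeries (Fin n) ℂ) (μ : Fin n →₀ ℕ) :
    MvPolynomial.coeff μ (leastPart f) =
      if μ ∈ (Finset.Iic ((Finsupp.equivFunOnFinite.symm fun _ => ordPS f) : Fin n →₀ ℕ)).filter
          (fun ν => degF ν = ordPS f) then MvPowerSeries.coeff μ f else 0 := by
  rw [leastPart, leastPartD, MvPolynomial.coeff_sum]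
  simp [MvPolynomial.coeff_monomial]

lemma pairS_leastPart_ne_zero {n : ℕ} (f : MvPowerSeries (Fin n) ℂ) (hf : f ≠ 0) :
    pairS (leastPart f) f ≠ 0 := by
  obtain ⟨ν₀, hν₀⟩ : ∃ ν, MvPowerSeries.coeff ν f ≠ 0 := by
    by_contra h
    push_neg at h
    exact hf (by ext ν; simpa using h ν)
  have hdmem : ordPS f ∈ {d | ∃ ν, degF ν = d ∧ MvPowerSeries.coeff ν f ≠ 0} :=
    Nat.sInf_mem ⟨degF ν₀, ν₀, rfl, hν₀⟩
  obtain ⟨ν₁, hν₁d, hν₁⟩ := hdmem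
  set p := leastPart f with hp
  have hmemFil : ν₁ ∈ (Finset.Iic ((Finsupp.equivFunOnFinite.symm fun _ => ordPS f) :
      Fin n →₀ ℕ)).filter (fun ν => degF ν = ordPS f) := by
    refine Finset.mem_filter.2 ⟨Finset.mem_Iic.2 ?_, hν₁d⟩
    intro i
    simpa [Finsupp.equivFunOnFinite, hν₁d] using (hν₁d ▸ apply_le_degF ν₁ i)
  have hcoeff : ∀ μ ∈ p.support, MvPolynomial.coeff μ p = MvPowerSeries.coeff μ f := by
    intro μ hμ
    rw [MvPolynomial.mem_support_iff] at hμ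
    rw [coeff_leastPart] at hμ ⊢
    split at hμ
    · rw [if_pos ‹_›]
    · exact absurd rfl hμ
  have hν₁supp : ν₁ ∈ p.support := by
    rw [MvPolynomial.mem_support_iff, coeff_leastPart, if_pos hmemFil]
    exact hν₁
  have hkey : pairS p f = ((∑ μ ∈ p.support,
      ((∏ i, Nat.factorial (μ i) : ℕ) : ℝ) * Complex.normSq (MvPowerSeries.coeff μ f) : ℝ) : ℂ) := by
    rw [pairS]
    push_cast
    refine Finset.sum_congr rfl fun μ hμ => ?_
    rw [hcoeff μ hμ, mul_assoc, Complex.mul_conj]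
  rw [hkey]
  rw [Complex.ofReal_ne_zero]
  have hpos : (0:ℝ) < ∑ μ ∈ p.support,
      ((∏ i, Nat.factorial (μ i) : ℕ) : ℝ) * Complex.normSq (MvPowerSeries.coeff μ f) := by
    refine Finset.sum_pos (fun μ hμ => ?_) ⟨ν₁, hν₁supp⟩
    have h1 : (0:ℝ) < ((∏ i, Nat.factorial (μ i) : ℕ) : ℝ) := by
      exact_mod_cast Finset.prod_pos fun i _ => Nat.factorial_pos (μ i)
    have h2 : (0:ℝ) < Complex.normSq (MvPowerSeries.coeff μ f) := by
      rw [Complex.normSq_pos]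
      rw [MvPolynomial.mem_support_iff] at hμ
      rw [← hcoeff μ (MvPolynomial.mem_support_iff.2 hμ)]
      exact hμ
    exact mul_pos h1 h2
  exact ne_of_gt hpos


lemma nondeg {n : ℕ} (Z : Submodule ℂ (MvPowerSeries (Fin n) ℂ))
    (f : MvPowerSeries (Fin n) ℂ) (hfZ : f ∈ Z)
    (h : ∀ p ∈ leastSpace Z, pairS p f = 0) : f = 0 := by
  by_contra hf
  exact pairS_leastPart_ne_zero f hf
    (h _ (Submodule.subset_span ⟨f, hfZ, rfl⟩))

/-- the projector T adjoint to the inclusion Z↓ ↪ C[τ] is a retraction onto Z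
and its kernel is the annihilator of Z↓. -/
theorem stmt15 {n : ℕ} (Z : Submodule ℂ (MvPowerSeries (Fin n) ℂ))
    [FiniteDimensional ℂ Z]
    (hZD : ∀ f ∈ Z, ∀ i : Fin n, pderivPS i f ∈ Z)
    (hD : DInvP (leastSpace Z))
    (T : MvPowerSeries (Fin n) ℂ → MvPowerSeries (Fin n) ℂ)
    (hTZ : ∀ f, T f ∈ Z)
    (hTadj : ∀ f, ∀ p ∈ leastSpace Z, pairS p (T f) = pairS p f) :
    (∀ f ∈ Z, T f = f) ∧
    (∀ f, T f = 0 ↔ ∀ p ∈ leastSpace Z, pairS p f = 0) :=  by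
  constructor
  · intro f hf
    have h0 : ∀ p ∈ leastSpace Z, pairS p (T f - f) = 0 := fun p hp => by
      rw [pairS_sub, hTadj f p hp, sub_self]
    have := nondeg Z (T f - f) (Submodule.sub_mem Z (hTZ f) hf) h0
    exact sub_eq_zero.1 this
  · intro f
    constructor
    · intro h p hp
      rw [← hTadj f p hp, h, pairS_zero]
    · intro h
      refine nondeg Z (T f) (hTZ f) fun p hp => ?_
      rw [hTadj f p hp]
      exact h p hp
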